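/- arXiv:1305.3429 — 3 statements merged into one kernel-verified Lean document; each statement's English description precedes it below -/
import Mathlib

section
/- For all integers n ≥ 1 and d ≥ 1, the space Hom(ℤ^{2d}, SL(n,ℂ))⁺/SL(n,ℂ) of conjugation classes of 2d-tuples of commuting semisimple elements of SL(n,ℂ) is path connected. -/
open Matrix

/-- The space `Hom(ℤ^m, G)` of commuting `m`-tuples with entries in a subset `G`
of a monoid `M`, as a subset of `M^m` (with the subspace topology). -/
def commTuples {M : Type*} [Monoid M] (m : ℕ) (G : Set M) : Set (Fin m → M) :=
  {f | (∀ i, f i ∈ G) ∧ ∀ i j, f i * f j = f j * f i}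

/-- Simultaneous conjugation, by elements of `G` (together with their inverses in `G`),
of tuples lying in a subset `S` of `M^m`. -/
def conjRel {M : Type*} [Monoid M] {m : ℕ} (G : Set M) (S : Set (Fin m → M)) :
    S → S → Prop := fun x y =>
  ∃ g gi : M, g ∈ G ∧ gi ∈ G ∧ g * gi = 1 ∧ gi * g = 1 ∧
    ∀ i, g * (x : Fin m → M) i * gi = (y : Fin m → M) i

/-- The conjugation orbit space `S/G`, with the quotient topology. -/
abbrev RepSpace {M : Type*} [Monoid M] [TopologicalSpace M] {m : ℕ} (G : Set M)
    (S : Set (Fin m → M)) : Type _ := Quot (conjRel G S)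

/-- `A` is a strong deformation retract of `X`. -/
def IsStrongDeformationRetract {X : Type*} [TopologicalSpace X] (A : Set X) : Prop :=
  ∃ H : X × unitInterval → X, Continuous H ∧
    (∀ x, H (x, 0) = x) ∧ (∀ x, H (x, 1) ∈ A) ∧ (∀ a ∈ A, ∀ t, H (a, t) = a)

/-- A complex square matrix is semisimple if it is diagonalizable over `ℂ`. -/
def IsSemisimpleMat {n : ℕ} (A : Matrix (Fin n) (Fin n) ℂ) : Prop :=
  ∃ P Pi : Matrix (Fin n) (Fin n) ℂ, P * Pi = 1 ∧ Pi * P = 1 ∧ (Pi * A * P).IsDiag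

/-- The subspace `Hom(ℤ^m, G)⁺` of commuting `m`-tuples in `G` all of whose entries
are semisimple. -/
def ssTuples (m : ℕ) {n : ℕ} (G : Set (Matrix (Fin n) (Fin n) ℂ)) :
    Set (Fin m → Matrix (Fin n) (Fin n) ℂ) :=
  {f | f ∈ commTuples m G ∧ ∀ i, IsSemisimpleMat (f i)}

/-- `GL(n,ℂ)` as the set of invertible complex `n × n` matrices. -/
def GLset (n : ℕ) : Set (Matrix (Fin n) (Fin n) ℂ) := {A | IsUnit A}

/-- `U(n)` as a set of complex `n × n` matrices. -/
def Uset (n : ℕ) : Set (Matrix (Fin n) (Fin n) ℂ) := Matrix.unitaryGroup (Fin n) ℂ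

/-- `SL(n,ℂ)` as the set of complex `n × n` matrices of determinant one. -/
def SLset (n : ℕ) : Set (Matrix (Fin n) (Fin n) ℂ) := {A | A.det = 1}

/-- `SU(n)` as a set of complex `n × n` matrices. -/
def SUset (n : ℕ) : Set (Matrix (Fin n) (Fin n) ℂ) :=
  {A | A ∈ Matrix.unitaryGroup (Fin n) ℂ ∧ A.det = 1}

open Polynomial in
lemma aux_semisimple {n : ℕ} (A : Matrix (Fin n) (Fin n) ℂ) (hA : IsSemisimpleMat A) :
    Module.End.IsSemisimple (Matrix.toLinAlgEquiv' A : Module.End ℂ (Fin n → ℂ)) := by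
  obtain ⟨P, Pi, h1, h2, hdiag⟩ := hA
  set D := Pi * A * P with hD
  have hAPDP : A = P * D * Pi := by
    rw [hD]
    calc A = (P * Pi) * A * (P * Pi) := by rw [h1]; rw [Matrix.one_mul, Matrix.mul_one]
    _ = P * (Pi * A * P) * Pi := by noncomm_ring
  -- the squarefree polynomial
  set v : Fin n → ℂ := fun j => D j j with hv
  set s : Finset ℂ := Finset.image v Finset.univ with hs
  set p : ℂ[X] := ∏ μ ∈ s, (X - C μ) with hp
  have hsq : Squarefree p := by
    have : p.Separable := by
      apply Polynomial.separable_prod_X_sub_C_iff'.mpr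
      intro x _ y _ h; exact h
    exact this.squarefree
  -- aeval of the diagonal matrix
  have hDdiag : D = Matrix.diagonal v := by
    ext i j
    rcases eq_or_ne i j with rfl | hij
    · simp [Matrix.diagonal, hv]
    · simp [Matrix.diagonal, hij, hdiag hij]
  have haevD : aeval D p = 0 := by
    rw [hDdiag]
    rw [show Matrix.diagonal v = Matrix.diagonalAlgHom ℂ v from rfl,
      Polynomial.aeval_algHom_apply]
    have hv0 : aeval v p = 0 := by
      funext j
      rw [Polynomial.aeval_fn_apply, hp]
      rw [map_prod]
      apply Finset.prod_eq_zero (Finset.mem_image_of_mem v (Finset.mem_univ j))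
      simp
    rw [hv0]; exact Matrix.diagonal_zero
  have haevA : aeval A p = 0 := by
    -- conjugation algebra hom
    let φ : Matrix (Fin n) (Fin n) ℂ →ₐ[ℂ] Matrix (Fin n) (Fin n) ℂ :=
      { toFun := fun M => P * M * Pi
        map_one' := by simp only [Matrix.mul_one]; exact h1
        map_mul' := fun M N => by
          calc P * (M * N) * Pi = P * M * (Pi * P) * N * Pi := by rw [h2]; noncomm_ring
          _ = (P * M * Pi) * (P * N * Pi) := by noncomm_ring
        map_zero' := by simp
        map_add' := fun M N => by noncomm_ring
        commutes' := fun c => by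
          simp only [Algebra.algebraMap_eq_smul_one]
          rw [Matrix.mul_smul, Matrix.mul_one, Matrix.smul_mul, h1] }
    have : A = φ D := hAPDP
    rw [this, Polynomial.aeval_algHom_apply, haevD, map_zero]
  exact Module.End.isSemisimple_of_squarefree_aeval_eq_zero hsq
    (by rw [Polynomial.aeval_algHom_apply, haevA, map_zero])


open Module.End in
lemma aux_simdiag {m n : ℕ} (f : Fin m → Matrix (Fin n) (Fin n) ℂ)
    (hcomm : ∀ i j, f i * f j = f j * f i) (hss : ∀ i, IsSemisimpleMat (f i)) :
    ∃ Q Qi : Matrix (Fin n) (Fin n) ℂ, Q * Qi = 1 ∧ Qi * Q = 1 ∧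
      ∀ i, (Q * f i * Qi).IsDiag := by
  classical
  set V := Fin n → ℂ
  set T : Fin m → Module.End ℂ V := fun i => Matrix.toLinAlgEquiv' (f i) with hT
  have hTcomm : Pairwise fun i j => Commute (T i) (T j) := by
    intro i j _
    have : T i * T j = T j * T i := by
      rw [hT]; simp only; rw [← _root_.map_mul, ← _root_.map_mul, hcomm]
    exact this
  have htop : ∀ i, ⨆ μ, (T i).maxGenEigenspace μ = ⊤ := fun i =>
    Module.End.iSup_maxGenEigenspace_eq_top (T i)
  have hfs : ∀ i, (T i).IsFinitelySemisimple := fun i =>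
    (aux_semisimple (f i) (hss i)).isFinitelySemisimple
  have big : ⨆ χ : Fin m → ℂ, ⨅ i, (T i).maxGenEigenspace (χ i) = ⊤ :=
    Module.End.iSup_iInf_maxGenEigenspace_eq_top_of_iSup_maxGenEigenspace_eq_top_of_commute
      T hTcomm htop
  -- joint eigenvectors span
  set S : Set V := {v | ∃ χ : Fin m → ℂ, ∀ i, T i v = χ i • v} with hS
  have hspan : ⊤ ≤ Submodule.span ℂ S := by
    rw [← big]
    apply iSup_le
    intro χ
    intro v hv
    apply Submodule.subset_span
    refine ⟨χ, fun i => ?_⟩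
    have : v ∈ (T i).maxGenEigenspace (χ i) := (Submodule.mem_iInf _).mp hv i
    rw [(hfs i).maxGenEigenspace_eq_eigenspace] at this
    exact Module.End.mem_eigenspace_iff.mp this
  -- get a basis inside S
  have hli : LinearIndepOn ℂ id (∅ : Set V) := linearIndependent_empty ℂ V
  set b := Module.Basis.extendLe hli (Set.empty_subset S) hspan with hb
  have hbS : ∀ x, (b x : V) ∈ S := by
    intro x
    have := Module.Basis.extendLe_subset hli (Set.empty_subset S) hspan
    exact this ⟨x, rfl⟩
  -- reindex by Fin n
  have : FiniteDimensional ℂ V := by infer_instance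
  haveI : Fintype (hli.extend (Set.empty_subset S)) := FiniteDimensional.fintypeBasisIndex b
  have hcard : Fintype.card (hli.extend (Set.empty_subset S)) = n := by
    rw [← Module.finrank_eq_card_basis b]
    simp [V]
  set e := Fintype.equivFinOfCardEq hcard with he
  set c : Module.Basis (Fin n) ℂ V := b.reindex e with hc
  have hcS : ∀ j, (c j : V) ∈ S := fun j => by
    rw [hc, Module.Basis.reindex_apply]; exact hbS _
  choose χv hχv using fun j => hcS j
  -- the change of basis matrix
  set P : Matrix (Fin n) (Fin n) ℂ := (Pi.basisFun ℂ (Fin n)).toMatrix c with hP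
  haveI : Invertible P := (Pi.basisFun ℂ (Fin n)).invertibleToMatrix c
  have hPapp : ∀ i j, P i j = c j i := by
    intro i j
    rw [hP, Module.Basis.toMatrix_apply]
    simp
  have key : ∀ i, f i * P = P * Matrix.diagonal (fun j => χv j i) := by
    intro i
    ext a j
    have hev : T i (c j) = χv j i • c j := hχv j i
    have : (f i).mulVec (c j) = χv j i • (c j : V) := by
      have : T i (c j) = (f i).mulVec (c j) := rfl
      rw [← this, hev]
    calc (f i * P) a j = ((f i).mulVec (c j)) a := by
          rw [Matrix.mul_apply, Matrix.mulVec]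
          simp [dotProduct, hPapp]
    _ = χv j i * c j a := by rw [this]; rfl
    _ = (P * Matrix.diagonal (fun j => χv j i)) a j := by
          rw [Matrix.mul_apply]
          simp [Matrix.diagonal_apply, hPapp, Finset.sum_ite_eq, mul_comm]
  refine ⟨⅟P, P, invOf_mul_self P, mul_invOf_self P, fun i => ?_⟩
  have : ⅟P * f i * P = Matrix.diagonal (fun j => χv j i) := by
    rw [Matrix.mul_assoc, key i, ← Matrix.mul_assoc, invOf_mul_self, Matrix.one_mul]
  rw [this]
  exact Matrix.isDiag_diagonal _

lemma aux_diagpath {n : ℕ} (hn : 1 ≤ n) (w : Fin n → ℂ) (hw : ∏ j, w j = 1) :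
    ∃ μ : ℝ → Fin n → ℂ, (Continuous fun t => μ t) ∧ (μ 0 = w) ∧ (μ 1 = 1) ∧
      ∀ t, ∏ j, μ t j = 1 := by
  classical
  set j0 : Fin n := ⟨0, hn⟩ with hj0
  have hw0 : ∀ j, w j ≠ 0 := by
    intro j hj
    apply one_ne_zero (α := ℂ)
    rw [← hw]
    exact Finset.prod_eq_zero (Finset.mem_univ j) hj
  set c : Fin n → ℂ := fun j =>
    if j = j0 then -∑ j' ∈ Finset.univ.erase j0, Complex.log (w j')
    else Complex.log (w j) with hc
  have hsum : ∑ j, c j = 0 := by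
    rw [← Finset.add_sum_erase Finset.univ c (Finset.mem_univ j0)]
    have h1 : c j0 = -∑ j' ∈ Finset.univ.erase j0, Complex.log (w j') := by simp [hc]
    have h2 : ∑ j ∈ Finset.univ.erase j0, c j
        = ∑ j' ∈ Finset.univ.erase j0, Complex.log (w j') := by
      apply Finset.sum_congr rfl
      intro j hj
      have : j ≠ j0 := (Finset.mem_erase.mp hj).1
      simp [hc, this]
    rw [h1, h2, neg_add_cancel]
  have hexp : ∀ j, Complex.exp (c j) = w j := by
    intro j
    rcases eq_or_ne j j0 with hj | hj
    · have h3 : Complex.exp (∑ j' ∈ Finset.univ.erase j0, Complex.log (w j'))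
          = ∏ j' ∈ Finset.univ.erase j0, w j' := by
        rw [Complex.exp_sum]
        exact Finset.prod_congr rfl fun j' _ => Complex.exp_log (hw0 j')
      have hprod : w j0 * ∏ j' ∈ Finset.univ.erase j0, w j' = 1 := by
        rw [Finset.mul_prod_erase Finset.univ w (Finset.mem_univ j0)]
        exact hw
      have hpne : (∏ j' ∈ Finset.univ.erase j0, w j') ≠ 0 := by
        intro h0
        rw [h0, mul_zero] at hprod
        exact zero_ne_one hprod
      rw [hj]
      simp only [hc, if_pos rfl, Complex.exp_neg, h3]
      exact inv_eq_of_mul_eq_one_right (by linear_combination hprod)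
    · simp only [hc, if_neg hj]
      exact Complex.exp_log (hw0 j)
  refine ⟨fun t j => Complex.exp ((1 - (t : ℂ)) * c j), ?_, ?_, ?_, ?_⟩
  · apply continuous_pi
    intro j
    exact Complex.continuous_exp.comp
      (((continuous_const.sub (Complex.continuous_ofReal.comp continuous_id)).mul
        continuous_const))
  · funext j; simpa using hexp j
  · funext j; simp
  · intro t
    rw [← Complex.exp_sum, ← Finset.mul_sum, hsum, mul_zero, Complex.exp_zero]

/-- Corollary 4.8 of Biswas–Florentino for `G = SL(n,ℂ)`: the space of conjugation
classes of `2d`-tuples of commuting semisimple elements of `SL(n,ℂ)` is path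
connected. -/
theorem specialLinear_char_variety_pathConnected (n d : ℕ) (hn : 1 ≤ n) (hd : 1 ≤ d) :
    PathConnectedSpace (RepSpace (SLset n) (ssTuples (2*d) (SLset n))) := by
  classical
  set m := 2 * d with hm
  -- the identity tuple
  have hone : (fun _ : Fin m => (1 : Matrix (Fin n) (Fin n) ℂ)) ∈ ssTuples m (SLset n) := by
    refine ⟨⟨fun i => ?_, fun i j => rfl⟩, fun i => ⟨1, 1, one_mul 1, one_mul 1, ?_⟩⟩
    · show Matrix.det (1 : Matrix (Fin n) (Fin n) ℂ) = 1
      exact Matrix.det_one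
    · simpa using Matrix.isDiag_one
  set E : ssTuples m (SLset n) := ⟨_, hone⟩ with hE
  -- every class is joined to the class of E
  have key : ∀ a : ssTuples m (SLset n),
      Joined (Quot.mk (conjRel (SLset n) (ssTuples m (SLset n))) a)
        (Quot.mk (conjRel (SLset n) (ssTuples m (SLset n))) E) := by
    intro a
    obtain ⟨g, ⟨⟨hgSL, hgcomm⟩, hgss⟩⟩ := a
    -- simultaneous diagonalization
    obtain ⟨Q, Qi, hQQi, hQiQ, hQdiag⟩ := aux_simdiag g hgcomm hgss
    -- rescale to determinant one
    have hdetQ : Q.det * Qi.det = 1 := by rw [← Matrix.det_mul, hQQi, Matrix.det_one]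
    obtain ⟨cc, hcc⟩ := IsAlgClosed.exists_pow_nat_eq (k := ℂ) Q.det⁻¹ (lt_of_lt_of_le one_pos hn)
    have hQdet0 : Q.det ≠ 0 := by
      intro h0; rw [h0, zero_mul] at hdetQ; exact zero_ne_one hdetQ
    have hccne : cc ≠ 0 := by
      intro h0
      have hz : Q.det⁻¹ = 0 := by
        rw [← hcc, h0]
        exact zero_pow (by omega)
      exact hQdet0 (inv_eq_zero.mp hz)
    set Q' := cc • Q with hQ'
    set Qi' := cc⁻¹ • Qi with hQi'
    have hQ'Qi' : Q' * Qi' = 1 := by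
      rw [hQ', hQi', Matrix.smul_mul, Matrix.mul_smul, smul_smul, mul_inv_cancel₀ hccne,
        one_smul, hQQi]
    have hQi'Q' : Qi' * Q' = 1 := by
      rw [hQ', hQi', Matrix.smul_mul, Matrix.mul_smul, smul_smul, inv_mul_cancel₀ hccne,
        one_smul, hQiQ]
    have hdetQ' : Q'.det = 1 := by
      rw [hQ', Matrix.det_smul, Fintype.card_fin, hcc, inv_mul_cancel₀ hQdet0]
    have hdetQi' : Qi'.det = 1 := by
      have : Q'.det * Qi'.det = 1 := by rw [← Matrix.det_mul, hQ'Qi', Matrix.det_one]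
      rw [hdetQ', one_mul] at this; exact this
    have hconj : ∀ i, Q' * g i * Qi' = Q * g i * Qi := by
      intro i
      rw [hQ', hQi', Matrix.smul_mul, Matrix.smul_mul, Matrix.mul_smul, smul_smul,
        mul_inv_cancel₀ hccne, one_smul]
    -- the diagonalized tuple
    set y : Fin m → Matrix (Fin n) (Fin n) ℂ := fun i => Q' * g i * Qi' with hy
    have hydiag : ∀ i, (y i).IsDiag := fun i => by rw [hy]; simpa [hconj i] using hQdiag i
    have hySL : ∀ i, (y i).det = 1 := by
      intro i
      rw [hy]
      simp only [Matrix.det_mul, hdetQ', hdetQi']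
      rw [one_mul, mul_one]
      exact hgSL i
    have hymem : y ∈ ssTuples m (SLset n) := by
      refine ⟨⟨fun i => hySL i, fun i j => ?_⟩, fun i => ⟨1, 1, one_mul 1, one_mul 1, ?_⟩⟩
      · rw [hy]
        simp only
        calc Q' * g i * Qi' * (Q' * g j * Qi')
            = Q' * (g i * (Qi' * Q') * g j) * Qi' := by noncomm_ring
        _ = Q' * (g i * g j) * Qi' := by rw [hQi'Q']; noncomm_ring
        _ = Q' * (g j * g i) * Qi' := by rw [hgcomm]
        _ = Q' * (g j * (Qi' * Q') * g i) * Qi' := by rw [hQi'Q']; noncomm_ring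
        _ = Q' * g j * Qi' * (Q' * g i * Qi') := by noncomm_ring
      · simpa [Matrix.one_mul, Matrix.mul_one] using hydiag i
    -- same class
    have hclass : Quot.mk (conjRel (SLset n) (ssTuples m (SLset n)))
          ⟨g, ⟨⟨hgSL, hgcomm⟩, hgss⟩⟩
        = Quot.mk (conjRel (SLset n) (ssTuples m (SLset n))) ⟨y, hymem⟩ :=
      Quot.sound ⟨Q', Qi', hdetQ', hdetQi', hQ'Qi', hQi'Q', fun i => rfl⟩
    rw [hclass]
    -- now construct the path from the diagonal tuple to E
    set w : Fin m → Fin n → ℂ := fun k j => y k j j with hw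
    have hyw : ∀ k, y k = Matrix.diagonal (w k) := by
      intro k
      ext i j
      rcases eq_or_ne i j with rfl | hij
      · simp [Matrix.diagonal, hw]
      · simp [Matrix.diagonal, hij, hydiag k hij]
    have hwprod : ∀ k, ∏ j, w k j = 1 := by
      intro k
      rw [← Matrix.det_diagonal, ← hyw k]
      exact hySL k
    choose μ hμcont hμ0 hμ1 hμprod using fun k => aux_diagpath hn (w k) (hwprod k)
    -- the path tuple
    set γ : ℝ → Fin m → Matrix (Fin n) (Fin n) ℂ :=
      fun t k => Matrix.diagonal (μ k t) with hγ
    have hγmem : ∀ t, γ t ∈ ssTuples m (SLset n) := by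
      intro t
      refine ⟨⟨fun k => ?_, fun k l => ?_⟩, fun k => ⟨1, 1, one_mul 1, one_mul 1, ?_⟩⟩
      · show (γ t k).det = 1
        rw [hγ]
        simp only [Matrix.det_diagonal]
        exact hμprod k t
      · rw [hγ]
        simp only [Matrix.diagonal_mul_diagonal]
        exact congrArg _ (funext fun i => mul_comm _ _)
      · rw [Matrix.one_mul, Matrix.mul_one, hγ]
        exact Matrix.isDiag_diagonal _
    have hγcont : Continuous fun t : ℝ => γ t := by
      apply continuous_pi
      intro k
      apply continuous_matrix
      intro i j
      rcases eq_or_ne i j with rfl | hij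
      · simp only [hγ, Matrix.diagonal_apply_eq]
        exact (continuous_apply i).comp (hμcont k)
      · simp only [hγ, Matrix.diagonal_apply_ne _ hij]
        exact continuous_const
    -- build the path in the quotient
    refine Nonempty.intro (Path.mk (ContinuousMap.mk
      (fun t : unitInterval => Quot.mk (conjRel (SLset n) (ssTuples m (SLset n)))
        ⟨γ (t : ℝ), hγmem _⟩) ?_) ?_ ?_)
    · exact (continuous_quot_mk).comp
        ((Continuous.subtype_mk (hγcont.comp continuous_subtype_val) _))
    · show Quot.mk (conjRel (SLset n) (ssTuples m (SLset n)))
          ⟨γ ((0 : unitInterval) : ℝ), hγmem _⟩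
        = Quot.mk (conjRel (SLset n) (ssTuples m (SLset n))) ⟨y, hymem⟩
      congr 1
      apply Subtype.ext
      show γ 0 = y
      funext k
      rw [hγ]
      simp only
      rw [hμ0 k, ← hyw k]
    · show Quot.mk (conjRel (SLset n) (ssTuples m (SLset n)))
          ⟨γ ((1 : unitInterval) : ℝ), hγmem _⟩
        = Quot.mk (conjRel (SLset n) (ssTuples m (SLset n))) E
      congr 1
      apply Subtype.ext
      show γ 1 = fun _ => 1
      funext k
      rw [hγ]
      simp only
      rw [hμ1 k]
      exact Matrix.diagonal_one
  refine ⟨⟨Quot.mk _ E⟩, fun x y => ?_⟩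
  obtain ⟨a, rfl⟩ := Quot.exists_rep x
  obtain ⟨b, rfl⟩ := Quot.exists_rep y
  exact (key a).trans (key b).symm
end

section
/- For all integers n ≥ 1 and d ≥ 1, with Sp(2n,ℂ) = {g ∈ GL(2n,ℂ) : gᵀ J g = J} for the standard skew-symmetric matrix J, the space Hom(ℤ^{2d}, Sp(2n,ℂ))⁺/Sp(2n,ℂ) of conjugation classes of 2d-tuples of commuting semisimple elements of Sp(2n,ℂ) is path connected. -/
open Matrix

/-- The standard skew-symmetric `2n × 2n` matrix `J` defining the symplectic form,
viewed as a matrix indexed by `Fin (2*n)`. -/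
noncomputable def Jstd (n : ℕ) : Matrix (Fin (2*n)) (Fin (2*n)) ℂ :=
  Matrix.reindex (finSumFinEquiv.trans (finCongr (two_mul n).symm))
    (finSumFinEquiv.trans (finCongr (two_mul n).symm)) (Matrix.J (Fin n) ℂ)

/-- `Sp(2n,ℂ) = {g ∈ GL(2n,ℂ) : gᵀ J g = J}` as a set of complex `2n × 2n` matrices. -/
def Spset (n : ℕ) : Set (Matrix (Fin (2*n)) (Fin (2*n)) ℂ) :=
  {A | IsUnit A ∧ Aᵀ * Jstd n * A = Jstd n}

namespace BF

open Module

variable {n : ℕ}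

noncomputable abbrev sigEq (n : ℕ) : (Fin n ⊕ Fin n) ≃ Fin (2*n) :=
  finSumFinEquiv.trans (finCongr (two_mul n).symm)

lemma Jstd_apply (n : ℕ) (a b : Fin (2*n)) :
    Jstd n a b = Matrix.J (Fin n) ℂ ((sigEq n).symm a) ((sigEq n).symm b) := rfl

lemma Jstd_transpose (n : ℕ) : (Jstd n)ᵀ = -(Jstd n) := by
  ext a b
  have h := congrFun (congrFun (Matrix.J_transpose (Fin n) ℂ) ((sigEq n).symm a))
      ((sigEq n).symm b)
  simpa [Jstd_apply, Matrix.transpose_apply] using h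

lemma Jstd_isUnit (n : ℕ) : IsUnit (Jstd n) := by
  rw [Matrix.isUnit_iff_isUnit_det]
  rw [show Jstd n = Matrix.reindex (sigEq n) (sigEq n) (Matrix.J (Fin n) ℂ) from rfl,
    Matrix.det_reindex_self]
  exact Matrix.isUnit_det_J (Fin n) ℂ

/-- The symplectic bilinear form. -/
noncomputable def sform (n : ℕ) (x y : Fin (2*n) → ℂ) : ℂ := x ⬝ᵥ (Jstd n) *ᵥ y

lemma sform_add_right (x y z : Fin (2*n) → ℂ) :
    sform n x (y + z) = sform n x y + sform n x z := by
  simp [sform, Matrix.mulVec_add, dotProduct_add]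

lemma sform_smul_right (c : ℂ) (x y : Fin (2*n) → ℂ) :
    sform n x (c • y) = c * sform n x y := by
  simp [sform, Matrix.mulVec_smul, dotProduct_smul, smul_eq_mul]

lemma sform_add_left (x y z : Fin (2*n) → ℂ) :
    sform n (x + y) z = sform n x z + sform n y z := by
  simp [sform, add_dotProduct]

lemma sform_smul_left (c : ℂ) (x y : Fin (2*n) → ℂ) :
    sform n (c • x) y = c * sform n x y := by
  simp [sform, smul_dotProduct, smul_eq_mul]

lemma sform_zero_right (x : Fin (2*n) → ℂ) : sform n x 0 = 0 := by
  simp [sform]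

lemma sform_self (x : Fin (2*n) → ℂ) : sform n x x = 0 := by
  have h : sform n x x = -(sform n x x) := by
    conv_lhs => rw [sform, Matrix.dotProduct_mulVec]
    rw [← Matrix.mulVec_transpose, Jstd_transpose, Matrix.neg_mulVec, neg_dotProduct,
      dotProduct_comm]
    rfl
  linear_combination h / 2

lemma sform_comm (x y : Fin (2*n) → ℂ) : sform n x y = -(sform n y x) := by
  have h := sform_self (n := n) (x + y)
  rw [sform_add_left, sform_add_right, sform_add_right, sform_self, sform_self] at h
  linear_combination h

lemma sform_sub_right (x y z : Fin (2*n) → ℂ) :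
    sform n x (y - z) = sform n x y - sform n x z := by
  have h := sform_add_right (n := n) x (y - z) z
  rw [sub_add_cancel] at h
  linear_combination -h

/-- `sform` as a linear map in the second variable. -/
noncomputable def sformL (n : ℕ) (x : Fin (2*n) → ℂ) : (Fin (2*n) → ℂ) →ₗ[ℂ] ℂ where
  toFun y := sform n x y
  map_add' y z := by simp [sform, Matrix.mulVec_add, dotProduct_add]
  map_smul' c y := by simp [sform, Matrix.mulVec_smul, dotProduct_smul, smul_eq_mul]

lemma sformL_apply (x y : Fin (2*n) → ℂ) : sformL n x y = sform n x y := rfl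

lemma Spset_one : (1 : Matrix (Fin (2*n)) (Fin (2*n)) ℂ) ∈ Spset n :=
  ⟨isUnit_one, by simp⟩

lemma Spset_mul {A B : Matrix (Fin (2*n)) (Fin (2*n)) ℂ} (hA : A ∈ Spset n)
    (hB : B ∈ Spset n) : A * B ∈ Spset n := by
  refine ⟨hA.1.mul hB.1, ?_⟩
  rw [Matrix.transpose_mul]
  calc Bᵀ * Aᵀ * Jstd n * (A * B) = Bᵀ * (Aᵀ * Jstd n * A) * B := by
        simp only [Matrix.mul_assoc]
      _ = Jstd n := by rw [hA.2, hB.2]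

lemma Spset_inv {A : Matrix (Fin (2*n)) (Fin (2*n)) ℂ} (hA : A ∈ Spset n) :
    A⁻¹ ∈ Spset n ∧ A * A⁻¹ = 1 ∧ A⁻¹ * A = 1 := by
  have hdet : IsUnit A.det := (Matrix.isUnit_iff_isUnit_det A).mp hA.1
  have h1 : A * A⁻¹ = 1 := Matrix.mul_nonsing_inv A hdet
  have h2 : A⁻¹ * A = 1 := Matrix.nonsing_inv_mul A hdet
  refine ⟨⟨(Matrix.isUnit_nonsing_inv_iff).mpr hA.1, ?_⟩, h1, h2⟩
  have key : (A⁻¹)ᵀ * (Aᵀ * Jstd n * A) * A⁻¹ = (A⁻¹)ᵀ * Jstd n * A⁻¹ := by rw [hA.2]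
  calc (A⁻¹)ᵀ * Jstd n * A⁻¹ = (A⁻¹)ᵀ * (Aᵀ * Jstd n * A) * A⁻¹ := key.symm
    _ = ((A⁻¹)ᵀ * Aᵀ) * Jstd n * (A * A⁻¹) := by simp only [Matrix.mul_assoc]
    _ = Jstd n := by
        rw [← Matrix.transpose_mul, h1, Matrix.transpose_one, Matrix.one_mul, Matrix.mul_one]

lemma sform_invariant {A : Matrix (Fin (2*n)) (Fin (2*n)) ℂ} (hA : A ∈ Spset n)
    (x y : Fin (2*n) → ℂ) : sform n (A *ᵥ x) (A *ᵥ y) = sform n x y := by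
  unfold sform
  rw [Matrix.mulVec_mulVec, Matrix.dotProduct_mulVec, ← Matrix.vecMul_transpose,
    Matrix.vecMul_vecMul, ← Matrix.mul_assoc, hA.2, ← Matrix.dotProduct_mulVec]

lemma sform_nondeg (x : Fin (2*n) → ℂ) (hx : x ≠ 0) : ∃ y, sform n x y ≠ 0 := by
  have hvm : Matrix.vecMul x (Jstd n) ≠ 0 := by
    intro h
    apply hx
    have := congrArg (fun v => Matrix.vecMul v (Jstd n)⁻¹) h
    simp only [Matrix.vecMul_vecMul] at this
    rwa [Matrix.mul_nonsing_inv _ ((Matrix.isUnit_iff_isUnit_det _).mp (Jstd_isUnit n)),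
      Matrix.vecMul_one, Matrix.zero_vecMul] at this
  obtain ⟨j, hj⟩ := Function.ne_iff.mp hvm
  refine ⟨Pi.single j 1, ?_⟩
  rw [sform, Matrix.dotProduct_mulVec]
  simpa [dotProduct_single] using hj

section Semisimple

variable {N : ℕ} {A : Matrix (Fin N) (Fin N) ℂ}

lemma mulVecLin_pow (A : Matrix (Fin N) (Fin N) ℂ) (k : ℕ) :
    (A.mulVecLin) ^ k = (A ^ k).mulVecLin := by
  induction k with
  | zero => ext x; simp
  | succ k ih => rw [pow_succ, pow_succ, ih, Matrix.mulVecLin_mul]; rfl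

lemma mulVecLin_sub_smul_one (A : Matrix (Fin N) (Fin N) ℂ) (μ : ℂ) :
    A.mulVecLin - μ • (1 : Module.End ℂ (Fin N → ℂ)) = (A - μ • 1).mulVecLin := by
  refine LinearMap.ext fun x => ?_
  simp only [LinearMap.sub_apply, LinearMap.smul_apply, Module.End.one_apply,
    Matrix.mulVecLin_apply, Matrix.sub_mulVec, Matrix.smul_mulVec, Matrix.one_mulVec]

lemma conj_pow {P Q C : Matrix (Fin N) (Fin N) ℂ} (hPQ : P * Q = 1)
    (hQP : Q * P = 1) (k : ℕ) : (P * C * Q) ^ k = P * C ^ k * Q := by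
  induction k with
  | zero => simp [hPQ]
  | succ k ih =>
      rw [pow_succ, ih, pow_succ]
      calc P * C ^ k * Q * (P * C * Q) = P * C ^ k * (Q * P) * C * Q := by
            simp only [Matrix.mul_assoc]
          _ = P * (C ^ k * C) * Q := by rw [hQP]; simp only [Matrix.mul_assoc, Matrix.mul_one]
          _ = _ := by simp only [Matrix.mul_assoc]

lemma single_eq_smul_single (j : Fin N) (c : ℂ) :
    (Pi.single j c : Fin N → ℂ) = c • (Pi.single j (1 : ℂ) : Fin N → ℂ) := by
  ext i
  by_cases h : i = j
  · subst h; simp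
  · simp [Pi.single_apply, h]

lemma diagonal_mulVec_single_one (d : Fin N → ℂ) (j : Fin N) :
    (Matrix.diagonal d) *ᵥ (Pi.single j (1:ℂ) : Fin N → ℂ)
      = d j • ((Pi.single j (1:ℂ) : Fin N → ℂ)) := by
  ext i
  by_cases h : i = j
  · subst h; simp [Matrix.mulVec_diagonal]
  · simp [Matrix.mulVec_diagonal, Pi.single_apply, h]

/-- The eigenspaces of a semisimple matrix span. -/
lemma iSup_eigenspace_eq_top (h : IsSemisimpleMat A) :
    ⨆ μ, Module.End.eigenspace (A.mulVecLin) μ = ⊤ := by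
  obtain ⟨P, Q, hPQ, hQP, hdiag⟩ := h
  set D := Q * A * P with hD
  have hAPD : A * P = P * D := by
    rw [hD]
    calc A * P = (P * Q) * A * P := by rw [hPQ, Matrix.one_mul]
      _ = P * (Q * A * P) := by simp only [Matrix.mul_assoc]
  have hDdiag : Matrix.diagonal D.diag = D := hdiag.diagonal_diag
  rw [eq_top_iff]
  intro x _
  have hx : x = ∑ j, P *ᵥ Pi.single j ((Q *ᵥ x) j) := by
    have h1 : ∑ j, Pi.single j ((Q *ᵥ x) j) = Q *ᵥ x := Finset.univ_sum_single _
    calc x = (P * Q) *ᵥ x := by rw [hPQ, Matrix.one_mulVec]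
      _ = P *ᵥ (Q *ᵥ x) := by rw [← Matrix.mulVec_mulVec]
      _ = P.mulVecLin (∑ j, Pi.single j ((Q *ᵥ x) j)) := by rw [h1]; rfl
      _ = ∑ j, P *ᵥ Pi.single j ((Q *ᵥ x) j) := by rw [map_sum]; rfl
  rw [hx]
  apply Submodule.sum_mem
  intro j _
  have hcol : A *ᵥ (P *ᵥ Pi.single j (1:ℂ)) = D.diag j • (P *ᵥ Pi.single j (1:ℂ)) := by
    rw [Matrix.mulVec_mulVec, hAPD, ← Matrix.mulVec_mulVec, ← hDdiag,
      diagonal_mulVec_single_one, Matrix.mulVec_smul]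
    simp
  have hmem : (P *ᵥ Pi.single j (1:ℂ)) ∈ Module.End.eigenspace (A.mulVecLin) (D.diag j) :=
    Module.End.mem_eigenspace_iff.mpr hcol
  refine Submodule.mem_iSup_of_mem (D.diag j) ?_
  rw [single_eq_smul_single, Matrix.mulVec_smul]
  exact Submodule.smul_mem _ _ hmem

/-- Generalized eigenvectors of a semisimple matrix are eigenvectors. -/
lemma maxGen_le_eigenspace (h : IsSemisimpleMat A) (μ : ℂ) :
    Module.End.maxGenEigenspace (A.mulVecLin) μ ≤ Module.End.eigenspace (A.mulVecLin) μ := by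
  obtain ⟨P, Q, hPQ, hQP, hdiag⟩ := h
  set D := Q * A * P with hD
  have hDdiag : Matrix.diagonal D.diag = D := hdiag.diagonal_diag
  have hA : A = P * D * Q := by
    rw [hD]
    calc A = (P * Q) * A * (P * Q) := by rw [hPQ]; simp [Matrix.mul_assoc]
      _ = P * (Q * A * P) * Q := by simp only [Matrix.mul_assoc]
  intro x hx
  rw [Module.End.mem_maxGenEigenspace] at hx
  obtain ⟨k, hk⟩ := hx
  rcases Nat.eq_zero_or_pos k with hk0 | hkpos
  · subst hk0
    simp only [pow_zero, Module.End.one_apply] at hk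
    rw [hk]
    exact Submodule.zero_mem _
  rw [mulVecLin_sub_smul_one, mulVecLin_pow] at hk
  have hsub : A - μ • 1 = P * (D - μ • 1) * Q := by
    rw [Matrix.mul_sub, Matrix.sub_mul, ← hA]
    congr 1
    rw [Matrix.mul_smul, Matrix.mul_one, Matrix.smul_mul, hPQ]
  rw [hsub, conj_pow hPQ hQP] at hk
  have hy : ((D - μ • 1) ^ k) *ᵥ (Q *ᵥ x) = 0 := by
    have h0 : (P * (D - μ • 1) ^ k * Q) *ᵥ x = 0 := hk
    calc ((D - μ • 1) ^ k) *ᵥ (Q *ᵥ x) = ((D - μ • 1) ^ k * Q) *ᵥ x := by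
          rw [Matrix.mulVec_mulVec]
      _ = (Q * (P * (D - μ • 1) ^ k * Q)) *ᵥ x := by
          rw [show Q * (P * (D - μ • 1) ^ k * Q) = (Q * P) * (D - μ • 1) ^ k * Q by
            simp only [Matrix.mul_assoc], hQP, Matrix.one_mul]
      _ = Q *ᵥ ((P * (D - μ • 1) ^ k * Q) *ᵥ x) := by rw [← Matrix.mulVec_mulVec]
      _ = 0 := by rw [h0, Matrix.mulVec_zero]
  have hDsub : D - μ • 1 = Matrix.diagonal (fun j => D.diag j - μ) := by
    rw [← hDdiag]
    ext i j
    by_cases hij : i = j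
    · subst hij; simp [Matrix.diagonal]
    · simp [Matrix.diagonal_apply_ne _ hij, Matrix.one_apply_ne hij]
  rw [hDsub, Matrix.diagonal_pow] at hy
  have hy1 : (Matrix.diagonal (fun j => D.diag j - μ)) *ᵥ (Q *ᵥ x) = 0 := by
    ext j
    have hj := congrFun hy j
    simp only [Matrix.mulVec_diagonal, Pi.pow_apply, Pi.zero_apply] at hj ⊢
    rcases mul_eq_zero.mp hj with h0 | h0
    · rw [pow_eq_zero_iff hkpos.ne'] at h0
      rw [h0, zero_mul]
    · rw [h0, mul_zero]
  have hfin : (A - μ • 1) *ᵥ x = 0 := by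
    rw [hsub, hDsub, ← Matrix.mulVec_mulVec, ← Matrix.mulVec_mulVec, hy1,
      Matrix.mulVec_zero]
  rw [Module.End.mem_eigenspace_iff]
  have h2 : A *ᵥ x - μ • x = 0 := by
    rw [← hfin]
    simp [Matrix.sub_mulVec, Matrix.smul_mulVec]
  rw [show (A.mulVecLin) x = A *ᵥ x from rfl, ← sub_eq_zero]
  exact h2

end Semisimple

set_option maxHeartbeats 1000000 in
/-- The key induction: a graded symplectic basis exists for any graded nondegenerate
subspace. -/
lemma keyInduction (n m : ℕ) (V : (Fin m → ℂ) → Submodule ℂ (Fin (2*n) → ℂ))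
    (horth : ∀ (χ ψ : Fin m → ℂ) (x y : Fin (2*n) → ℂ), x ∈ V χ → y ∈ V ψ →
      (∃ i, χ i * ψ i ≠ 1) → sform n x y = 0)
    (hV0 : ∀ (χ : Fin m → ℂ) (x : Fin (2*n) → ℂ), x ∈ V χ → x ≠ 0 → ∀ i, χ i ≠ 0) :
    ∀ (k : ℕ) (W : Submodule ℂ (Fin (2*n) → ℂ)),
      Module.finrank ℂ W ≤ k →
      (∀ x ∈ W, x ∈ ⨆ χ, W ⊓ V χ) →
      (∀ x ∈ W, x ≠ 0 → ∃ y ∈ W, sform n x y ≠ 0) →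
      ∃ (r : ℕ) (e f : Fin r → (Fin (2*n) → ℂ)),
        (∀ a, e a ∈ W) ∧ (∀ a, f a ∈ W) ∧
        (∀ a, ∃ χ, e a ∈ V χ) ∧ (∀ a, ∃ χ, f a ∈ V χ) ∧
        (∀ a b, sform n (e a) (e b) = 0) ∧ (∀ a b, sform n (f a) (f b) = 0) ∧
        (∀ a b, sform n (e a) (f b) = if a = b then 1 else 0) ∧
        (W : Set (Fin (2*n) → ℂ)) ⊆
          (Submodule.span ℂ (Set.range e ∪ Set.range f) : Submodule ℂ (Fin (2*n) → ℂ)) := by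
  intro k
  induction k with
  | zero =>
    intro W hrk _ _
    have hW : W = ⊥ := by
      rw [← Submodule.finrank_eq_zero (R := ℂ) (M := Fin (2*n) → ℂ)]
      omega
    refine ⟨0, (fun a => a.elim0), (fun a => a.elim0), fun a => a.elim0, fun a => a.elim0,
      fun a => a.elim0, fun a => a.elim0, fun a => a.elim0, fun a => a.elim0,
      fun a b => a.elim0, ?_⟩
    intro x hx
    rw [hW] at hx
    simp only [SetLike.mem_coe, Submodule.mem_bot] at hx
    simp [hx, Submodule.zero_mem]
  | succ k ih =>
    intro W hrk hgr hnd
    by_cases hbot : W = ⊥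
    · refine ⟨0, (fun a => a.elim0), (fun a => a.elim0), fun a => a.elim0, fun a => a.elim0,
        fun a => a.elim0, fun a => a.elim0, fun a => a.elim0, fun a => a.elim0,
        fun a b => a.elim0, ?_⟩
      intro x hx
      rw [hbot] at hx
      simp only [SetLike.mem_coe, Submodule.mem_bot] at hx
      simp [hx, Submodule.zero_mem]
    -- find a nonzero homogeneous element e₀
    obtain ⟨x₀, hx₀W, hx₀ne⟩ := Submodule.exists_mem_ne_zero_of_ne_bot hbot
    have hx₀sup := hgr x₀ hx₀W
    have hexχ : ∃ χ, W ⊓ V χ ≠ ⊥ := by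
      by_contra h
      push_neg at h
      have : (⨆ χ, W ⊓ V χ) = ⊥ := by
        simp only [h, iSup_bot]
      rw [this, Submodule.mem_bot] at hx₀sup
      exact hx₀ne hx₀sup
    obtain ⟨χ₀, hχ₀⟩ := hexχ
    obtain ⟨e₀, he₀mem, he₀ne⟩ := Submodule.exists_mem_ne_zero_of_ne_bot hχ₀
    obtain ⟨he₀W, he₀V⟩ := Submodule.mem_inf.mp he₀mem
    have hχ0 : ∀ i, χ₀ i ≠ 0 := hV0 χ₀ e₀ he₀V he₀ne
    -- find the dual partner f₀
    obtain ⟨y, hyW, hy⟩ := hnd e₀ he₀W he₀ne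
    obtain ⟨c, hc, hsum⟩ := (Submodule.mem_iSup_iff_exists_finsupp _ _).mp (hgr y hyW)
    have hysum : sform n e₀ y = ∑ ψ ∈ c.support, sform n e₀ (c ψ) := by
      rw [← hsum, ← sformL_apply]
      rw [map_finsuppSum]
      simp only [sformL_apply]
      rfl
    have hex : ∃ ψ ∈ c.support, sform n e₀ (c ψ) ≠ 0 := by
      by_contra h
      push_neg at h
      rw [hysum, Finset.sum_eq_zero h] at hy
      exact hy rfl
    obtain ⟨ψ₀, hψ₀supp, hα⟩ := hex
    set w := c ψ₀ with hw
    have hwW : w ∈ W := (Submodule.mem_inf.mp (hc ψ₀)).1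
    have hwV : w ∈ V ψ₀ := (Submodule.mem_inf.mp (hc ψ₀)).2
    set α := sform n e₀ w with hαdef
    set f₀ := α⁻¹ • w with hf₀
    have hf₀W : f₀ ∈ W := Submodule.smul_mem _ _ hwW
    have hf₀V : f₀ ∈ V ψ₀ := Submodule.smul_mem _ _ hwV
    clear_value f₀
    have hef : sform n e₀ f₀ = 1 := by
      rw [hf₀, sform_smul_right, ← hαdef, inv_mul_cancel₀ hα]
    have hf₀ne : f₀ ≠ 0 := by
      intro h
      rw [h, sform_zero_right] at hef
      exact zero_ne_one (α := ℂ) hef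
    have hψ0 : ∀ i, ψ₀ i ≠ 0 := hV0 ψ₀ f₀ hf₀V hf₀ne
    have hpair : ∀ i, χ₀ i * ψ₀ i = 1 := by
      by_contra h
      push_neg at h
      rw [horth χ₀ ψ₀ e₀ f₀ he₀V hf₀V h] at hef
      exact one_ne_zero hef.symm
    have huniq1 : ∀ ψ : Fin m → ℂ, (∀ i, χ₀ i * ψ i = 1) → ψ = ψ₀ := by
      intro ψ hψ
      funext i
      exact mul_left_cancel₀ (hχ0 i) ((hψ i).trans (hpair i).symm)
    have hpair' : ∀ i, ψ₀ i * χ₀ i = 1 := fun i => by rw [mul_comm]; exact hpair i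
    have huniq2 : ∀ ψ : Fin m → ℂ, (∀ i, ψ₀ i * ψ i = 1) → ψ = χ₀ := by
      intro ψ hψ
      funext i
      exact mul_left_cancel₀ (hψ0 i) ((hψ i).trans (hpair' i).symm)
    have hfe : sform n f₀ e₀ = -1 := by rw [sform_comm, hef]
    -- the orthogonal complement U
    set U := W ⊓ LinearMap.ker (sformL n e₀) ⊓ LinearMap.ker (sformL n f₀) with hU
    have hUW : U ≤ W := fun x hx => hx.1.1
    have hUe : ∀ x ∈ U, sform n e₀ x = 0 := by
      intro x hx
      rw [← sformL_apply]
      exact hx.1.2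
    have hUf : ∀ x ∈ U, sform n f₀ x = 0 := by
      intro x hx
      rw [← sformL_apply]
      exact hx.2
    have hmemU : ∀ x, x ∈ W → sform n e₀ x = 0 → sform n f₀ x = 0 → x ∈ U := by
      intro x h1 h2 h3
      refine Submodule.mem_inf.mpr ⟨Submodule.mem_inf.mpr ⟨h1, ?_⟩, ?_⟩
      · exact LinearMap.mem_ker.mpr ((sformL_apply _ _).trans h2)
      · exact LinearMap.mem_ker.mpr ((sformL_apply _ _).trans h3)
    -- the correction map
    have hcorr : ∀ x ∈ W, (x - (sform n e₀ x) • f₀ + (sform n f₀ x) • e₀) ∈ U := by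
      intro x hxW
      apply hmemU
      · exact Submodule.add_mem _ (Submodule.sub_mem _ hxW (Submodule.smul_mem _ _ hf₀W))
          (Submodule.smul_mem _ _ he₀W)
      · rw [sform_add_right, sform_sub_right, sform_smul_right, sform_smul_right,
          hef, sform_self]
        ring
      · rw [sform_add_right, sform_sub_right, sform_smul_right, sform_smul_right,
          hfe, sform_self]
        ring
    -- grading of U
    have hgrU : ∀ x ∈ U, x ∈ ⨆ χ, U ⊓ V χ := by
      intro x hxU
      obtain ⟨b, hb, hbsum⟩ :=
        (Submodule.mem_iSup_iff_exists_finsupp _ _).mp (hgr x (hUW hxU))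
      refine (Submodule.mem_iSup_iff_exists_finsupp _ _).mpr ⟨b, ?_, hbsum⟩
      have hsumform : ∀ z : Fin (2*n) → ℂ,
          sform n z x = ∑ ψ ∈ b.support, sform n z (b ψ) := by
        intro z
        rw [← hbsum, ← sformL_apply, map_finsuppSum]
        simp only [sformL_apply]
        rfl
      have hAe : ∀ ψ, sform n e₀ (b ψ) = 0 := by
        have hne : ∀ ψ, ψ ≠ ψ₀ → sform n e₀ (b ψ) = 0 := by
          intro ψ hψ
          refine horth χ₀ ψ e₀ (b ψ) he₀V (Submodule.mem_inf.mp (hb ψ)).2 ?_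
          by_contra hcon
          push_neg at hcon
          exact hψ (huniq1 ψ hcon)
        intro ψ
        by_cases hψ : ψ = ψ₀
        · subst hψ
          have h0 : sform n e₀ x = 0 := hUe x hxU
          rw [hsumform e₀] at h0
          by_cases hmem : ψ ∈ b.support
          · rw [Finset.sum_eq_single_of_mem ψ hmem
              (fun ψ' _ hne' => hne ψ' hne')] at h0
            exact h0
          · rw [Finsupp.notMem_support_iff.mp hmem, sform_zero_right]
        · exact hne ψ hψ
      have hAf : ∀ ψ, sform n f₀ (b ψ) = 0 := by
        have hne : ∀ ψ, ψ ≠ χ₀ → sform n f₀ (b ψ) = 0 := by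
          intro ψ hψ
          refine horth ψ₀ ψ f₀ (b ψ) hf₀V (Submodule.mem_inf.mp (hb ψ)).2 ?_
          by_contra hcon
          push_neg at hcon
          exact hψ (huniq2 ψ hcon)
        intro ψ
        by_cases hψ : ψ = χ₀
        · subst hψ
          have h0 : sform n f₀ x = 0 := hUf x hxU
          rw [hsumform f₀] at h0
          by_cases hmem : ψ ∈ b.support
          · rw [Finset.sum_eq_single_of_mem ψ hmem
              (fun ψ' _ hne' => hne ψ' hne')] at h0
            exact h0
          · rw [Finsupp.notMem_support_iff.mp hmem, sform_zero_right]
        · exact hne ψ hψ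
      intro ψ
      refine Submodule.mem_inf.mpr ⟨hmemU (b ψ) (Submodule.mem_inf.mp (hb ψ)).1
        (hAe ψ) (hAf ψ), (Submodule.mem_inf.mp (hb ψ)).2⟩
    -- nondegeneracy on U
    have hndU : ∀ x ∈ U, x ≠ 0 → ∃ y ∈ U, sform n x y ≠ 0 := by
      intro x hxU hxne
      obtain ⟨y, hyW, hy⟩ := hnd x (hUW hxU) hxne
      refine ⟨y - (sform n e₀ y) • f₀ + (sform n f₀ y) • e₀, hcorr y hyW, ?_⟩
      have h1 : sform n x f₀ = 0 := by rw [sform_comm, hUf x hxU, neg_zero]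
      have h2 : sform n x e₀ = 0 := by rw [sform_comm, hUe x hxU, neg_zero]
      rw [sform_add_right, sform_sub_right, sform_smul_right, sform_smul_right, h1, h2]
      simpa using hy
    -- dimension drop
    have hlt : U < W := by
      refine lt_of_le_of_ne hUW ?_
      intro h
      have : e₀ ∈ U := h ▸ he₀W
      have := hUf e₀ this
      rw [hfe] at this
      exact one_ne_zero (neg_eq_zero.mp this)
    have hrkU : Module.finrank ℂ U ≤ k := by
      have := Submodule.finrank_lt_finrank_of_lt hlt
      omega
    obtain ⟨r, e, f, heW, hfW, heV, hfV, hee, hff, hefr, hspan⟩ := ih U hrkU hgrU hndU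
    -- assemble
    refine ⟨r + 1, Fin.cons e₀ e, Fin.cons f₀ f, ?_, ?_, ?_, ?_, ?_, ?_, ?_, ?_⟩
    · intro a
      refine Fin.cases ?_ ?_ a
      · simpa using he₀W
      · intro b; simpa using hUW (heW b)
    · intro a
      refine Fin.cases ?_ ?_ a
      · simpa using hf₀W
      · intro b; simpa using hUW (hfW b)
    · intro a
      refine Fin.cases ?_ ?_ a
      · exact ⟨χ₀, by simpa using he₀V⟩
      · intro b
        obtain ⟨χ, hχ⟩ := heV b
        exact ⟨χ, by simpa using hχ⟩
    · intro a
      refine Fin.cases ?_ ?_ a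
      · exact ⟨ψ₀, by simpa using hf₀V⟩
      · intro b
        obtain ⟨χ, hχ⟩ := hfV b
        exact ⟨χ, by simpa using hχ⟩
    · intro a b
      refine Fin.cases ?_ ?_ a <;> [skip; intro a'] <;> refine Fin.cases ?_ ?_ b
      · simpa using sform_self e₀
      · intro b'
        simpa using hUe (e b') (heW b')
      · rw [Fin.cons_succ, Fin.cons_zero, sform_comm]
        simpa using hUe (e a') (heW a')
      · intro b'
        simpa using hee a' b'
    · intro a b
      refine Fin.cases ?_ ?_ a <;> [skip; intro a'] <;> refine Fin.cases ?_ ?_ b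
      · simpa using sform_self f₀
      · intro b'
        simpa using hUf (f b') (hfW b')
      · rw [Fin.cons_succ, Fin.cons_zero, sform_comm]
        simpa using hUf (f a') (hfW a')
      · intro b'
        simpa using hff a' b'
    · intro a b
      refine Fin.cases ?_ ?_ a <;> [skip; intro a'] <;> refine Fin.cases ?_ ?_ b
      · simpa using hef
      · intro b'
        rw [Fin.cons_zero, Fin.cons_succ]
        rw [if_neg (by simp [Fin.ext_iff])]
        simpa using hUe (f b') (hfW b')
      · rw [Fin.cons_succ, Fin.cons_zero, if_neg (by simp [Fin.ext_iff]), sform_comm]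
        rw [hUf (e a') (heW a'), neg_zero]
      · intro b'
        rw [Fin.cons_succ, Fin.cons_succ, hefr a' b']
        by_cases hab : a' = b'
        · subst hab; simp
        · rw [if_neg hab, if_neg (by simpa [Fin.succ_inj] using hab)]
    · intro x hxW
      have hx' := hcorr x hxW
      have hx'span := hspan hx'
      have hsub : (Submodule.span ℂ (Set.range e ∪ Set.range f) : Submodule ℂ (Fin (2*n) → ℂ)) ≤
          Submodule.span ℂ (Set.range (Fin.cons e₀ e : Fin (r+1) → (Fin (2*n) → ℂ)) ∪
            Set.range (Fin.cons f₀ f : Fin (r+1) → (Fin (2*n) → ℂ))) := by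
        apply Submodule.span_mono
        apply Set.union_subset_union
        · rintro - ⟨a, rfl⟩
          exact ⟨a.succ, by simp⟩
        · rintro - ⟨a, rfl⟩
          exact ⟨a.succ, by simp⟩
      have he₀span : e₀ ∈ Submodule.span ℂ (Set.range (Fin.cons e₀ e : Fin (r+1) → _) ∪
          Set.range (Fin.cons f₀ f : Fin (r+1) → _)) := by
        apply Submodule.subset_span
        exact Or.inl ⟨0, by simp⟩
      have hf₀span : f₀ ∈ Submodule.span ℂ (Set.range (Fin.cons e₀ e : Fin (r+1) → _) ∪
          Set.range (Fin.cons f₀ f : Fin (r+1) → _)) := by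
        apply Submodule.subset_span
        exact Or.inr ⟨0, by simp⟩
      have : x = (x - (sform n e₀ x) • f₀ + (sform n f₀ x) • e₀)
          + (sform n e₀ x) • f₀ - (sform n f₀ x) • e₀ := by ring_nf
      rw [this]
      exact Submodule.sub_mem _ (Submodule.add_mem _ (hsub hx'span)
        (Submodule.smul_mem _ _ hf₀span)) (Submodule.smul_mem _ _ he₀span)

/-- Linear independence of a symplectic system. -/
lemma symp_linearIndependent {r : ℕ} (e f : Fin r → (Fin (2*n) → ℂ))
    (hee : ∀ a b, sform n (e a) (e b) = 0) (hff : ∀ a b, sform n (f a) (f b) = 0)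
    (hef : ∀ a b, sform n (e a) (f b) = if a = b then 1 else 0) :
    LinearIndependent ℂ (Sum.elim e f) := by
  rw [Fintype.linearIndependent_iff]
  intro c hc
  have key : ∀ z : Fin (2*n) → ℂ,
      (0:ℂ) = ∑ i, c i * sform n z (Sum.elim e f i) := by
    intro z
    have h0 := congrArg (fun v => sformL n z v) hc
    simp only [map_sum, _root_.map_smul, map_zero, smul_eq_mul] at h0
    rw [← h0]
    refine (Finset.sum_congr rfl fun i _ => ?_).symm
    rw [sformL_apply]
  intro i
  cases i with
  | inl a =>
    have h := (key (f a)).symm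
    rw [Fintype.sum_sum_type] at h
    simp only [Sum.elim_inl, Sum.elim_inr] at h
    have he : ∀ b, sform n (f a) (e b) = if b = a then -1 else 0 := by
      intro b
      rw [sform_comm, hef b a]
      split <;> simp
    simp only [he, hff, mul_zero, mul_ite, mul_neg, mul_one, Finset.sum_const_zero,
      Finset.sum_ite_eq', Finset.mem_univ, if_true, add_zero] at h
    exact neg_eq_zero.mp h
  | inr a =>
    have h := (key (e a)).symm
    rw [Fintype.sum_sum_type] at h
    simp only [Sum.elim_inl, Sum.elim_inr] at h
    simp only [hee, hef, mul_zero, mul_ite, mul_one, Finset.sum_const_zero,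
      Finset.sum_ite_eq, Finset.sum_ite_eq', Finset.mem_univ, if_true, zero_add] at h
    exact h

open Sum

lemma J_inl_inl (k l : Fin n) : Matrix.J (Fin n) ℂ (inl k) (inl l) = 0 := by
  simp [Matrix.J]
lemma J_inl_inr (k l : Fin n) :
    Matrix.J (Fin n) ℂ (inl k) (inr l) = -(if k = l then 1 else 0) := by
  simp [Matrix.J, Matrix.one_apply]
lemma J_inr_inl (k l : Fin n) :
    Matrix.J (Fin n) ℂ (inr k) (inl l) = if k = l then 1 else 0 := by
  simp [Matrix.J, Matrix.one_apply]
lemma J_inr_inr (k l : Fin n) : Matrix.J (Fin n) ℂ (inr k) (inr l) = 0 := by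
  simp [Matrix.J]

lemma conj_entry (P : Matrix (Fin (2*n)) (Fin (2*n)) ℂ) (a b : Fin (2*n)) :
    (Pᵀ * Jstd n * P) a b = sform n (fun i => P i a) (fun j => P j b) := by
  simp only [sform, Matrix.mul_apply, Matrix.transpose_apply, dotProduct, Matrix.mulVec,
    Finset.sum_mul, Finset.mul_sum]
  rw [Finset.sum_comm]
  exact Finset.sum_congr rfl fun i _ => Finset.sum_congr rfl fun j _ => by ring

lemma isUnit_of_symp (P : Matrix (Fin (2*n)) (Fin (2*n)) ℂ)
    (h : Pᵀ * Jstd n * P = Jstd n) : IsUnit P := by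
  have hdet := congrArg Matrix.det h
  rw [Matrix.det_mul, Matrix.det_mul, Matrix.det_transpose] at hdet
  have hJ : (Jstd n).det ≠ 0 := by
    have := (Matrix.isUnit_iff_isUnit_det _).mp (Jstd_isUnit n)
    exact this.ne_zero
  rw [Matrix.isUnit_iff_isUnit_det, isUnit_iff_ne_zero]
  intro h0
  rw [h0, zero_mul, zero_mul] at hdet
  exact hJ hdet.symm

lemma mul_col (F P : Matrix (Fin (2*n)) (Fin (2*n)) ℂ) (a k : Fin (2*n)) :
    (F * P) a k = (F *ᵥ (fun j => P j k)) a := by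
  simp [Matrix.mul_apply, Matrix.mulVec, dotProduct]

lemma diag_pair {v : Fin (2*n) → ℂ}
    (h : (Matrix.diagonal v)ᵀ * Jstd n * Matrix.diagonal v = Jstd n) (k : Fin n) :
    v (sigEq n (inl k)) * v (sigEq n (inr k)) = 1 := by
  have he := congrFun (congrFun h (sigEq n (inl k))) (sigEq n (inr k))
  rw [Matrix.diagonal_transpose] at he
  rw [show Matrix.diagonal v * Jstd n * Matrix.diagonal v
      = Matrix.diagonal v * (Jstd n * Matrix.diagonal v) from by rw [Matrix.mul_assoc]] at he
  rw [Matrix.diagonal_mul, Matrix.mul_diagonal] at he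
  rw [Jstd_apply, Equiv.symm_apply_apply, Equiv.symm_apply_apply, J_inl_inr, if_pos rfl] at he
  linear_combination -he

lemma diag_mem_Spset {v : Fin (2*n) → ℂ}
    (hpair : ∀ k : Fin n, v (sigEq n (inl k)) * v (sigEq n (inr k)) = 1) :
    Matrix.diagonal v ∈ Spset n := by
  have hne : ∀ a, v a ≠ 0 := by
    intro a
    obtain ⟨u, rfl⟩ : ∃ u, a = sigEq n u := ⟨(sigEq n).symm a, by simp⟩
    cases u with
    | inl k => exact left_ne_zero_of_mul_eq_one (hpair k)
    | inr k => exact right_ne_zero_of_mul_eq_one (hpair k)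
  constructor
  · rw [Matrix.isUnit_iff_isUnit_det, Matrix.det_diagonal, isUnit_iff_ne_zero]
    exact Finset.prod_ne_zero_iff.mpr fun a _ => hne a
  · ext a b
    rw [Matrix.diagonal_transpose, Matrix.mul_assoc, Matrix.diagonal_mul, Matrix.mul_diagonal]
    obtain ⟨u, rfl⟩ : ∃ u, a = sigEq n u := ⟨(sigEq n).symm a, by simp⟩
    obtain ⟨w, rfl⟩ : ∃ w, b = sigEq n w := ⟨(sigEq n).symm b, by simp⟩
    rw [Jstd_apply, Equiv.symm_apply_apply, Equiv.symm_apply_apply]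
    cases u with
    | inl k =>
      cases w with
      | inl l => rw [J_inl_inl]; ring
      | inr l =>
        rw [J_inl_inr]
        by_cases hkl : k = l
        · subst hkl
          rw [if_pos rfl]
          linear_combination -(hpair k)
        · rw [if_neg hkl]; ring
    | inr k =>
      cases w with
      | inl l =>
        rw [J_inr_inl]
        by_cases hkl : k = l
        · subst hkl
          rw [if_pos rfl]
          linear_combination (hpair k)
        · rw [if_neg hkl]; ring
      | inr l => rw [J_inr_inr]; ring

lemma col_form (e f : Fin n → (Fin (2*n) → ℂ))
    (hee : ∀ a b, sform n (e a) (e b) = 0) (hff : ∀ a b, sform n (f a) (f b) = 0)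
    (hef : ∀ a b, sform n (e a) (f b) = if a = b then 1 else 0) (u w : Fin n ⊕ Fin n) :
    sform n (Sum.elim f e u) (Sum.elim f e w) = Matrix.J (Fin n) ℂ u w := by
  cases u with
  | inl k =>
    cases w with
    | inl l => rw [Sum.elim_inl, Sum.elim_inl, hff, J_inl_inl]
    | inr l =>
      rw [Sum.elim_inl, Sum.elim_inr, J_inl_inr, sform_comm, hef l k]
      by_cases h : k = l
      · subst h; simp
      · rw [if_neg h, if_neg (Ne.symm h)]
  | inr k =>
    cases w with
    | inl l => rw [Sum.elim_inr, Sum.elim_inl, J_inr_inl, hef k l]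
    | inr l => rw [Sum.elim_inr, Sum.elim_inr, hee, J_inr_inr]

end BF

set_option maxHeartbeats 2000000 in
/-- Corollary 4.8 of Biswas–Florentino for `G = Sp(2n,ℂ)`: the space of conjugation
classes of `2d`-tuples of commuting semisimple elements of `Sp(2n,ℂ)` is path
connected. -/
theorem symplectic_char_variety_pathConnected (n d : ℕ) (hn : 1 ≤ n) (hd : 1 ≤ d) :
    PathConnectedSpace (RepSpace (Spset n) (ssTuples (2*d) (Spset n))) := by
  classical
  -- the base point: the identity tuple
  have hone : (fun _ : Fin (2*d) => (1 : Matrix (Fin (2*n)) (Fin (2*n)) ℂ))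
      ∈ ssTuples (2*d) (Spset n) :=
    ⟨⟨fun _ => BF.Spset_one, fun _ _ => rfl⟩,
      fun _ => ⟨1, 1, by simp, by simp, by simp [Matrix.isDiag_one]⟩⟩
  set z₀ : RepSpace (Spset n) (ssTuples (2*d) (Spset n)) :=
    Quot.mk _ (⟨_, hone⟩ : ssTuples (2*d) (Spset n)) with hz₀
  -- every diagonal symplectic tuple is joined to the base point
  have joinDiag : ∀ (vd : Fin (2*d) → Fin (2*n) → ℂ)
      (hpair : ∀ i k, vd i (BF.sigEq n (Sum.inl k)) * vd i (BF.sigEq n (Sum.inr k)) = 1)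
      (hDss : (fun i => Matrix.diagonal (vd i)) ∈ ssTuples (2*d) (Spset n)),
      Joined z₀ (Quot.mk _ (⟨_, hDss⟩ : ssTuples (2*d) (Spset n))) := by
    intro vd hpair hDss
    set μ : Fin (2*d) → Fin n → ℂ := fun i k => Complex.log (vd i (BF.sigEq n (Sum.inl k)))
      with hμ
    set w : ℝ → Fin (2*d) → Fin (2*n) → ℂ := fun t i a =>
      Sum.elim (fun k => Complex.exp (t * μ i k)) (fun k => Complex.exp (-(t * μ i k)))
        ((BF.sigEq n).symm a) with hwdef
    have hwpair : ∀ (t : ℝ) i (k : Fin n),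
        w t i (BF.sigEq n (Sum.inl k)) * w t i (BF.sigEq n (Sum.inr k)) = 1 := by
      intro t i k
      simp only [hwdef, Equiv.symm_apply_apply, Sum.elim_inl, Sum.elim_inr]
      rw [← Complex.exp_add, add_neg_cancel, Complex.exp_zero]
    have hwss : ∀ t : ℝ, (fun i => Matrix.diagonal (w t i)) ∈ ssTuples (2*d) (Spset n) := by
      intro t
      refine ⟨⟨fun i => BF.diag_mem_Spset (hwpair t i), fun i j => ?_⟩,
        fun i => ⟨1, 1, by simp, by simp, by simp [Matrix.isDiag_diagonal]⟩⟩
      rw [Matrix.diagonal_mul_diagonal, Matrix.diagonal_mul_diagonal]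
      exact congrArg Matrix.diagonal (mul_comm _ _)
    have hvne : ∀ i a, vd i a ≠ 0 := by
      intro i a
      obtain ⟨u, rfl⟩ : ∃ u, a = BF.sigEq n u := ⟨(BF.sigEq n).symm a, by simp⟩
      cases u with
      | inl k => exact left_ne_zero_of_mul_eq_one (hpair i k)
      | inr k => exact right_ne_zero_of_mul_eq_one (hpair i k)
    have hw1 : ∀ i, Matrix.diagonal (w 1 i) = Matrix.diagonal (vd i) := by
      intro i
      refine congrArg Matrix.diagonal (funext fun a => ?_)
      obtain ⟨u, rfl⟩ : ∃ u, a = BF.sigEq n u := ⟨(BF.sigEq n).symm a, by simp⟩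
      cases u with
      | inl k =>
        simp only [hwdef, Equiv.symm_apply_apply, Sum.elim_inl, Complex.ofReal_one, one_mul]
        exact Complex.exp_log (hvne i _)
      | inr k =>
        simp only [hwdef, Equiv.symm_apply_apply, Sum.elim_inr, Complex.ofReal_one, one_mul]
        rw [Complex.exp_neg, Complex.exp_log (hvne i _)]
        exact inv_eq_of_mul_eq_one_right (hpair i k)
    have hw0 : ∀ i, Matrix.diagonal (w 0 i) = (1 : Matrix (Fin (2*n)) (Fin (2*n)) ℂ) := by
      intro i
      rw [← Matrix.diagonal_one]
      refine congrArg Matrix.diagonal (funext fun a => ?_)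
      obtain ⟨u, rfl⟩ : ∃ u, a = BF.sigEq n u := ⟨(BF.sigEq n).symm a, by simp⟩
      cases u with
      | inl k =>
        simp [hwdef]
      | inr k =>
        simp [hwdef]
    have hcont : Continuous fun t : ℝ =>
        (fun i => Matrix.diagonal (w t i) : Fin (2*d) → Matrix (Fin (2*n)) (Fin (2*n)) ℂ) := by
      apply continuous_pi
      intro i
      apply continuous_matrix
      intro a b
      by_cases hab : a = b
      · subst hab
        simp only [Matrix.diagonal_apply_eq]
        rcases h : (BF.sigEq n).symm a with k | k
        · simp only [hwdef, h, Sum.elim_inl]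
          exact Complex.continuous_exp.comp (Complex.continuous_ofReal.mul continuous_const)
        · simp only [hwdef, h, Sum.elim_inr]
          exact Complex.continuous_exp.comp
            ((Complex.continuous_ofReal.mul continuous_const).neg)
      · simp only [Matrix.diagonal_apply_ne _ hab]
        exact continuous_const
    refine ⟨⟨⟨fun t => Quot.mk _ ⟨fun i => Matrix.diagonal (w t.1 i), hwss t.1⟩, ?_⟩, ?_, ?_⟩⟩
    · exact (continuous_quot_mk).comp
        (Continuous.subtype_mk (hcont.comp continuous_subtype_val) _)
    · show Quot.mk _ _ = z₀
      rw [hz₀]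
      exact congrArg _ (Subtype.ext (funext fun i => by
        simp only [Set.Icc.coe_zero]
        rw [hw0 i]))
    · show Quot.mk _ _ = _
      exact congrArg _ (Subtype.ext (funext fun i => by
        simp only [Set.Icc.coe_one]
        rw [hw1 i]))
  -- every class is joined to the base point
  have key : ∀ F : ssTuples (2*d) (Spset n), Joined (Quot.mk _ F) z₀ := by
    rintro ⟨F, hFss⟩
    obtain ⟨⟨hFG, hFcomm⟩, hFsemi⟩ := hFss
    set T : Fin (2*d) → Module.End ℂ (Fin (2*n) → ℂ) := fun i => (F i).mulVecLin with hT
    have hcomm : Pairwise fun i j => Commute (T i) (T j) := by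
      intro i j _
      show T i * T j = T j * T i
      have h1 : ∀ a b : Fin (2*d), T a * T b = ((F a) * (F b)).mulVecLin := by
        intro a b
        refine LinearMap.ext fun x => ?_
        show (F a).mulVecLin ((F b).mulVecLin x) = _
        simp [Matrix.mulVecLin_apply, Matrix.mulVec_mulVec]
      rw [h1, h1, hFcomm i j]
    have hsup : ∀ i, ⨆ μ, (T i).maxGenEigenspace μ = ⊤ := by
      intro i
      rw [eq_top_iff, ← BF.iSup_eigenspace_eq_top (hFsemi i)]
      exact iSup_mono fun μ => ((T i).genEigenspace μ).monotone le_top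
    have htop := Module.End.iSup_iInf_maxGenEigenspace_eq_top_of_iSup_maxGenEigenspace_eq_top_of_commute
      T hcomm hsup
    set V : (Fin (2*d) → ℂ) → Submodule ℂ (Fin (2*n) → ℂ) :=
      fun χ => ⨅ i, (T i).eigenspace (χ i) with hV
    have hVtop : ⨆ χ, V χ = ⊤ := by
      rw [eq_top_iff, ← htop]
      refine iSup_mono fun χ => iInf_mono fun i => ?_
      exact BF.maxGen_le_eigenspace (hFsemi i) (χ i)
    have hmemV : ∀ χ x, x ∈ V χ → ∀ i, (F i) *ᵥ x = χ i • x := by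
      intro χ x hx i
      exact Module.End.mem_eigenspace_iff.mp ((Submodule.mem_iInf _).mp hx i)
    have horth : ∀ (χ ψ : Fin (2*d) → ℂ) x y, x ∈ V χ → y ∈ V ψ →
        (∃ i, χ i * ψ i ≠ 1) → BF.sform n x y = 0 := by
      rintro χ ψ x y hx hy ⟨i, hi⟩
      have h1 := BF.sform_invariant (hFG i) x y
      rw [hmemV χ x hx i, hmemV ψ y hy i, BF.sform_smul_left, BF.sform_smul_right] at h1
      have h2 : (χ i * ψ i - 1) * BF.sform n x y = 0 := by linear_combination h1
      rcases mul_eq_zero.mp h2 with h3 | h3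
      · exact absurd (by linear_combination h3) hi
      · exact h3
    have hV0 : ∀ (χ : Fin (2*d) → ℂ) x, x ∈ V χ → x ≠ 0 → ∀ i, χ i ≠ 0 := by
      intro χ x hx hxne i h0
      have h1 := hmemV χ x hx i
      rw [h0, zero_smul] at h1
      have hdet := (Matrix.isUnit_iff_isUnit_det _).mp (hFG i).1
      have hx0 : x = (F i)⁻¹ *ᵥ ((F i) *ᵥ x) := by
        rw [Matrix.mulVec_mulVec, Matrix.nonsing_inv_mul _ hdet, Matrix.one_mulVec]
      rw [h1, Matrix.mulVec_zero] at hx0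
      exact hxne hx0
    obtain ⟨r, e, f, heW, hfW, heV, hfV, hee, hff, hef, hspan⟩ :=
      BF.keyInduction n (2*d) V horth hV0 (2*n) ⊤
        (le_of_eq (by rw [finrank_top, Module.finrank_fin_fun]))
        (by
          intro x _
          have : (⨆ χ, (⊤ : Submodule ℂ (Fin (2*n) → ℂ)) ⊓ V χ) = ⨆ χ, V χ := by
            simp [top_inf_eq]
          rw [this, hVtop]
          trivial)
        (fun x _ hx => by
          obtain ⟨y, hy⟩ := BF.sform_nondeg x hx
          exact ⟨y, Submodule.mem_top, hy⟩)
    -- counting: r = n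
    have hli := BF.symp_linearIndependent e f hee hff hef
    have hsp : ⊤ ≤ Submodule.span ℂ (Set.range (Sum.elim e f)) := by
      rw [Set.Sum.elim_range]
      intro x _
      exact hspan (by trivial)
    have hrn : r = n := by
      have h1 := Module.finrank_eq_card_basis (Module.Basis.mk hli hsp)
      rw [Module.finrank_fin_fun] at h1
      simp only [Fintype.card_sum, Fintype.card_fin] at h1
      omega
    subst hrn
    -- build the symplectic base-change matrix
    set col : Fin r ⊕ Fin r → (Fin (2*r) → ℂ) := Sum.elim f e with hcol
    set P : Matrix (Fin (2*r)) (Fin (2*r)) ℂ :=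
      Matrix.of (fun i k => col ((BF.sigEq r).symm k) i) with hP
    have hPJ : Pᵀ * Jstd r * P = Jstd r := by
      ext a b
      rw [BF.conj_entry]
      rw [show (fun i => P i a) = col ((BF.sigEq r).symm a) from rfl,
        show (fun j => P j b) = col ((BF.sigEq r).symm b) from rfl]
      rw [hcol]
      rw [BF.col_form e f hee hff hef, BF.Jstd_apply]
    have hPunit := BF.isUnit_of_symp P hPJ
    have hPmem : P ∈ Spset r := ⟨hPunit, hPJ⟩
    obtain ⟨hPinvmem, hPPinv, hPinvP⟩ := BF.Spset_inv hPmem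
    -- the diagonal form
    have hcolV : ∀ u : Fin r ⊕ Fin r, ∃ χ, col u ∈ V χ := by
      intro u
      cases u with
      | inl k => exact hfV k
      | inr k => exact heV k
    choose χcol hχcol using hcolV
    set vd : Fin (2*d) → Fin (2*r) → ℂ := fun i k => χcol ((BF.sigEq r).symm k) i with hvd
    set Dt : Fin (2*d) → Matrix (Fin (2*r)) (Fin (2*r)) ℂ :=
      fun i => Matrix.diagonal (vd i) with hDtdef
    have hFP : ∀ i, F i * P = P * Dt i := by
      intro i
      ext a k
      rw [BF.mul_col, Matrix.mul_diagonal]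
      rw [show (fun j => P j k) = col ((BF.sigEq r).symm k) from rfl]
      rw [hmemV _ _ (hχcol ((BF.sigEq r).symm k)) i]
      simp only [Pi.smul_apply, smul_eq_mul, hvd]
      rw [mul_comm]
      rfl
    have hDt : ∀ i, Dt i = P⁻¹ * F i * P := by
      intro i
      rw [Matrix.mul_assoc, hFP i, ← Matrix.mul_assoc, hPinvP, Matrix.one_mul]
    have hDtmem : ∀ i, Dt i ∈ Spset r := by
      intro i
      rw [hDt i]
      exact BF.Spset_mul (BF.Spset_mul hPinvmem (hFG i)) hPmem
    have hpairD : ∀ i k, vd i (BF.sigEq r (Sum.inl k)) * vd i (BF.sigEq r (Sum.inr k)) = 1 := by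
      intro i k
      exact BF.diag_pair (hDtmem i).2 k
    have hDss : (fun i => Matrix.diagonal (vd i)) ∈ ssTuples (2*d) (Spset r) := by
      refine ⟨⟨fun i => hDtmem i, fun i j => ?_⟩,
        fun i => ⟨1, 1, by simp, by simp, by simp [Matrix.isDiag_diagonal]⟩⟩
      rw [Matrix.diagonal_mul_diagonal, Matrix.diagonal_mul_diagonal]
      exact congrArg Matrix.diagonal (mul_comm _ _)
    have hquot : Quot.mk (conjRel (Spset r) (ssTuples (2*d) (Spset r)))
        ⟨F, ⟨⟨hFG, hFcomm⟩, hFsemi⟩⟩ = Quot.mk _ ⟨fun i => Matrix.diagonal (vd i), hDss⟩ := by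
      apply Quot.sound
      refine ⟨P⁻¹, P, hPinvmem, hPmem, hPinvP, hPPinv, ?_⟩
      intro i
      show P⁻¹ * F i * P = Matrix.diagonal (vd i)
      rw [← hDt i]
    rw [hquot]
    exact (joinDiag vd hpairD hDss).symm
  refine ⟨⟨z₀⟩, fun x y => ?_⟩
  induction x using Quot.ind with
  | _ a =>
  induction y using Quot.ind with
  | _ b =>
  exact (key a).trans (key b).symm
end

section
/- For all integers n ≥ 1 and d ≥ 1, the space Hom(ℤ^{2d}, GL(n,ℂ))⁺/GL(n,ℂ) of conjugation classes of 2d-tuples of commuting semisimple elements of GL(n,ℂ) is path connected. -/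
open Matrix

section AuxProof

open Polynomial

lemma aux_commute_aeval {R A : Type*} [CommSemiring R] [Semiring A] [Algebra R A]
    {a b : A} (h : Commute a b) (p : R[X]) : Commute (aeval a p) b := by
  induction p using Polynomial.induction_on' with
  | add p q hp hq => rw [map_add]; exact hp.add_left hq
  | monomial k r =>
      rw [aeval_monomial]
      exact (Algebra.commute_algebraMap_left r b).mul_left (h.pow_left k)

variable {n : ℕ} {P Q D X Y : Matrix (Fin n) (Fin n) ℂ}

lemma aux_conj_mul (h2 : Q * P = 1) :
    (P * X * Q) * (P * Y * Q) = P * (X * Y) * Q := by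
  calc (P * X * Q) * (P * Y * Q) = P * (X * ((Q * P) * (Y * Q))) := by
        simp only [mul_assoc]
    _ = P * (X * Y) * Q := by rw [h2, one_mul]; simp only [mul_assoc]

lemma aux_conj_cancel (h2 : Q * P = 1) :
    Q * (P * D * Q) * P = D := by
  calc Q * (P * D * Q) * P = (Q * P) * (D * ((Q * P))) := by simp only [mul_assoc]
    _ = D := by rw [h2, one_mul, mul_one]

lemma aux_conj_pow (h1 : P * Q = 1) (h2 : Q * P = 1) (k : ℕ) :
    (P * D * Q) ^ k = P * D ^ k * Q := by
  induction k with
  | zero => rw [pow_zero, pow_zero, mul_one, h1]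
  | succ k ih => rw [pow_succ, ih, pow_succ, aux_conj_mul h2]

lemma aux_aeval_conj (h1 : P * Q = 1) (h2 : Q * P = 1) (p : ℂ[X]) :
    aeval (P * D * Q) p = P * aeval D p * Q := by
  induction p using Polynomial.induction_on' with
  | add p q hp hq =>
      rw [map_add, map_add, hp, hq, mul_add, add_mul]
  | monomial k r =>
      rw [aeval_monomial, aeval_monomial, aux_conj_pow h1 h2]
      calc algebraMap ℂ _ r * (P * D ^ k * Q)
          = (algebraMap ℂ _ r * P) * D ^ k * Q := by simp only [mul_assoc]
        _ = (P * algebraMap ℂ _ r) * D ^ k * Q := by rw [Algebra.commutes]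
        _ = P * (algebraMap ℂ _ r * D ^ k) * Q := by simp only [mul_assoc]

lemma aux_aeval_diagonal (e : Fin n → ℂ) (p : ℂ[X]) :
    aeval (Matrix.diagonal e) p = Matrix.diagonal (fun k => p.eval (e k)) := by
  have h0 : Matrix.diagonal e = Matrix.diagonalAlgHom ℂ e := rfl
  rw [h0, aeval_algHom_apply]
  simp only [Matrix.diagonalAlgHom_apply]
  have hfun : (aeval e p : Fin n → ℂ) = fun k => p.eval (e k) := by
    funext k
    have h := aeval_algHom_apply (Pi.evalAlgHom ℂ (fun _ : Fin n => ℂ) k) e p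
    simp only [Pi.evalAlgHom_apply] at h
    rw [← h]
    exact congrFun (Polynomial.coe_aeval_eq_eval (e k)) p
  rw [hfun]

lemma aux_semisimple_decomp {A : Matrix (Fin n) (Fin n) ℂ} (h : IsSemisimpleMat A) :
    ∃ P Q : Matrix (Fin n) (Fin n) ℂ, ∃ e : Fin n → ℂ,
      P * Q = 1 ∧ Q * P = 1 ∧ A = P * Matrix.diagonal e * Q := by
  obtain ⟨P, Q, h1, h2, hd⟩ := h
  refine ⟨P, Q, Matrix.diag (Q * A * P), h1, h2, ?_⟩
  rw [hd.diagonal_diag]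
  calc A = (P * Q) * A * (P * Q) := by rw [h1, one_mul, mul_one]
    _ = P * (Q * A * P) * Q := by simp only [mul_assoc]

end AuxProof

open Polynomial in
/-- For `G = GL(n,ℂ)`: the space of conjugation classes of `2d`-tuples of commuting
semisimple elements of `GL(n,ℂ)` is path connected. -/
theorem generalLinear_char_variety_pathConnected (n d : ℕ) (hn : 1 ≤ n) (hd : 1 ≤ d) :
    PathConnectedSpace (RepSpace (GLset n) (ssTuples (2*d) (GLset n))) := by
  set m := 2 * d with hm
  -- the identity tuple
  have hone : (fun _ : Fin m => (1 : Matrix (Fin n) (Fin n) ℂ)) ∈ ssTuples m (GLset n) := by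
    refine ⟨⟨fun _ => isUnit_one, fun _ _ => rfl⟩, fun _ => ⟨1, 1, one_mul 1, one_mul 1, ?_⟩⟩
    simpa using Matrix.isDiag_one
  -- the set of semisimple tuples is path connected
  have hS : PathConnectedSpace (ssTuples m (GLset n)) := by
    have key : ∀ x : ssTuples m (GLset n),
        Joined x ⟨fun _ => (1 : Matrix (Fin n) (Fin n) ℂ), hone⟩ := by
      rintro ⟨f, ⟨hG, hcomm⟩, hss⟩
      choose P Q e h1 h2 h3 using fun i => aux_semisimple_decomp (hss i)
      -- eigenvalues are nonzero
      have hdz : ∀ i k, e i k ≠ 0 := by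
        intro i k hk
        have hu : IsUnit (f i).det := (Matrix.isUnit_iff_isUnit_det _).mp (hG i)
        rw [h3 i, Matrix.det_mul, Matrix.det_mul, Matrix.det_diagonal] at hu
        have h0 : ∏ j, e i j = 0 := Finset.prod_eq_zero (Finset.mem_univ k) hk
        rw [h0] at hu
        simp at hu
      -- the deformation
      set g : ℝ → ℂ → ℂ := fun t z => Complex.exp ((1 - (t : ℂ)) * Complex.log z) with hg
      have hgne : ∀ t z, g t z ≠ 0 := fun t z => Complex.exp_ne_zero _
      set F : unitInterval → (Fin m → Matrix (Fin n) (Fin n) ℂ) :=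
        fun t i => P i * Matrix.diagonal (fun k => g (t : ℝ) (e i k)) * Q i with hF
      -- each entry of F is a polynomial in the corresponding entry of f
      have hpoly : ∀ (t : unitInterval) (i : Fin m), ∃ p : ℂ[X], F t i = aeval (f i) p := by
        intro t i
        refine ⟨Lagrange.interpolate (Finset.image (e i) Finset.univ) id (g (t : ℝ)), ?_⟩
        rw [h3 i, aux_aeval_conj (h1 i) (h2 i), aux_aeval_diagonal]
        simp only [hF]
        have heq : (fun k => g (t : ℝ) (e i k)) = fun k =>
            Polynomial.eval (e i k)
              (Lagrange.interpolate (Finset.image (e i) Finset.univ) id (g (t : ℝ))) := by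
          funext k
          exact (Lagrange.eval_interpolate_at_node _ (Set.injOn_id _)
            (Finset.mem_image_of_mem (e i) (Finset.mem_univ k))).symm
        rw [heq]
      -- F stays in the space of semisimple tuples
      have hmemb : ∀ t : unitInterval, F t ∈ ssTuples m (GLset n) := by
        intro t
        refine ⟨⟨fun i => ?_, fun i j => ?_⟩, fun i => ?_⟩
        · -- invertibility
          refine ⟨⟨F t i, P i * Matrix.diagonal (fun k => (g (t : ℝ) (e i k))⁻¹) * Q i, ?_, ?_⟩, rfl⟩
          · rw [hF]
            simp only
            rw [aux_conj_mul (h2 i), Matrix.diagonal_mul_diagonal]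
            simp only [mul_inv_cancel₀ (hgne _ _)]
            rw [Matrix.diagonal_one, mul_one, h1 i]
          · rw [hF]
            simp only
            rw [aux_conj_mul (h2 i), Matrix.diagonal_mul_diagonal]
            simp only [inv_mul_cancel₀ (hgne _ _)]
            rw [Matrix.diagonal_one, mul_one, h1 i]
        · -- commutativity
          obtain ⟨p, hp⟩ := hpoly t i
          obtain ⟨q, hq⟩ := hpoly t j
          rw [hp, hq]
          have hij : Commute (f i) (f j) := hcomm i j
          exact ((aux_commute_aeval ((aux_commute_aeval hij p).symm) q).symm).eq
        · -- semisimplicity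
          exact ⟨P i, Q i, h1 i, h2 i, by
            rw [hF]; simp only
            rw [aux_conj_cancel (h2 i)]
            exact Matrix.isDiag_diagonal _⟩
      -- endpoints
      have hF0 : F 0 = f := by
        funext i
        rw [hF]
        simp only [Set.Icc.coe_zero, Complex.ofReal_zero, sub_zero, one_mul, hg]
        have : (fun k => Complex.exp (Complex.log (e i k))) = e i := by
          funext k; exact Complex.exp_log (hdz i k)
        rw [this, ← h3 i]
      have hF1 : F 1 = fun _ => (1 : Matrix (Fin n) (Fin n) ℂ) := by
        funext i
        rw [hF]
        simp only [Set.Icc.coe_one, Complex.ofReal_one, sub_self, zero_mul, Complex.exp_zero, hg]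
        rw [Matrix.diagonal_one, mul_one, h1 i]
      -- continuity
      have hFc : Continuous F := by
        refine continuous_pi fun i => ((continuous_const.matrix_mul ?_).matrix_mul continuous_const)
        refine continuous_matrix fun k l => ?_
        by_cases hkl : k = l
        · subst hkl
          simp only [Matrix.diagonal_apply_eq]
          exact Complex.continuous_exp.comp
            ((continuous_const.sub (Complex.continuous_ofReal.comp continuous_subtype_val)).mul
              continuous_const)
        · simp only [Matrix.diagonal_apply_ne _ hkl]
          exact continuous_const
      exact ⟨⟨⟨fun t => ⟨F t, hmemb t⟩, hFc.subtype_mk _⟩, Subtype.ext hF0, Subtype.ext hF1⟩⟩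
    refine ⟨⟨⟨_, hone⟩⟩, fun x y => (key x).trans (key y).symm⟩
  exact (Function.Surjective.pathConnectedSpace (fun q => Quot.exists_rep q) continuous_quot_mk)
end
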